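/- arXiv:2202.01083 — 3 statements merged into one kernel-verified Lean document; each statement's English description precedes it below -/
import Mathlib

section
/- For a general linear method with V = diag(1, −1), a perturbation of the form y₂^{[m−1]} ↦ y₂^{[m−1]} + (−1)^{m−1} z_{m−1} in the parasitic component propagates, to first order in the perturbation, according to z_m = (I − h J Σᵢ b_{2i} u_{i2}) z_{m−1}, where J = ∂f/∂y; hence the linearized parasitic dynamics is the Euler discretisation of z' = μ J z with parasitic growth parameter μ = −Σᵢ b_{2i} u_{i2}. -/
/-- For a GLM with `V = diag(1, -1)` (explicit stages, `A = 0`, linear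
vector field `f = J`), a perturbation `y₂^{[m-1]} ↦ y₂^{[m-1]} + (-1)^{m-1} z` of
the parasitic component propagates according to
`z_m = (I + hμJ) z_{m-1}` with parasitic growth parameter `μ = -∑ᵢ b_{2i} u_{i2}`:
the perturbed second output equals the unperturbed one plus `(-1)^m (z + hμ J z)`. -/
theorem stmt8 {n : ℕ}
    (J : EuclideanSpace ℝ (Fin n) →L[ℝ] EuclideanSpace ℝ (Fin n)) (h : ℝ)
    (u b : Fin 2 → Fin 2 → ℝ)
    (y1 y2 z : EuclideanSpace ℝ (Fin n)) (c : ℝ) (hc : c = 1 ∨ c = -1)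
    (Y Y0 : Fin 2 → EuclideanSpace ℝ (Fin n))
    (hY : ∀ i, Y i = u i 0 • y1 + u i 1 • (y2 + c • z))
    (hY0 : ∀ i, Y0 i = u i 0 • y1 + u i 1 • y2)
    (μ : ℝ) (hμ : μ = -(∑ i, b 1 i * u i 1)) :
    h • (∑ i, b 1 i • J (Y i)) - (y2 + c • z)
      = (h • (∑ i, b 1 i • J (Y0 i)) - y2) + (-c) • (z + (h * μ) • J z) := by
  simp only [hY, hY0, hμ, Fin.sum_univ_two, map_add, map_smul, smul_add]
  module
end

section
/- For the GLM tableau of the leapfrog variational integrator with A = (0), U = (0,1,2,0), B = (0,0,1,1)ᵀ, V = [[0,1,2,0],[1,0,0,0],[0,0,0,0],[0,0,1,0]], the parasitic growth parameter μ computed via μ = ξ^{−1} w* B U w, where ξ is an eigenvalue of V with ξ ≠ 1 and w the corresponding normalized left eigenvector, equals −5/3 (≈ −1.667) for the relevant parasitic eigenvalue. -/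
open Matrix
/-- For the leapfrog GLM tableau with `U = (0,1,2,0)`,
`B = (0,0,1,1)ᵀ`, `V = [[0,1,2,0],[1,0,0,0],[0,0,0,0],[0,0,1,0]]`, the parasitic
growth parameter `μ = ξ⁻¹ w* (BU) w` for the parasitic eigenvalue `ξ = -1` of `V`
(with `w` the corresponding normalized left eigenvector, `BU` given by
`BU = [[0,0,0,0],[0,0,0,0],[0,1,2,0],[0,1,2,0]]`) equals `-5/3`. -/
theorem stmt9 (w : Fin 4 → ℝ)
    (hw : Matrix.vecMul w (!![0, 1, 2, 0; 1, 0, 0, 0; 0, 0, 0, 0; 0, 0, 1, 0] :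
            Matrix (Fin 4) (Fin 4) ℝ) = (-1 : ℝ) • w)
    (hnorm : w ⬝ᵥ w = 1) :
    (-1 : ℝ)⁻¹ * (w ⬝ᵥ (!![0, 0, 0, 0; 0, 0, 0, 0; 0, 1, 2, 0; 0, 1, 2, 0] :
        Matrix (Fin 4) (Fin 4) ℝ).mulVec w) = -5 / 3 := by
  have h0 := congrFun hw 0
  have h1 := congrFun hw 1
  have h2 := congrFun hw 2
  have h3 := congrFun hw 3
  simp [Matrix.vecMul, dotProduct, Fin.sum_univ_four, Matrix.vecHead, Matrix.vecTail] at h0 h1 h2 h3 hnorm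
  simp [Matrix.mulVec, dotProduct, Fin.sum_univ_four, Matrix.vecHead, Matrix.vecTail]
  have e1 : w 1 = -w 0 := h0
  have e3 : w 3 = 0 := h3
  have e2 : w 2 = -2 * w 0 := by linarith
  rw [e1, e2, e3] at hnorm ⊢
  nlinarith [hnorm]
end

section
/- Linear stability of the projected method versus the unprojected leapfrog for the harmonic oscillator: for the leapfrog method applied to the pendulum linearized at the stable equilibrium (q¹, q²) = (0, 0), i.e., to y' = (y², −y¹), a perturbation in the parasitic mode grows like the solutions of z' = μ J z with μ = −5/3 and J = [[0,1],[−1,0]]; since μJ has purely imaginary eigenvalues ±(5/3)i, the first-order parasitic modes do not grow exponentially but oscillate, and their amplitude after n Euler-type steps of size h is bounded by (1 + (5h/3)²)^{n/2} times the initial amplitude. -/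
lemma norm_step (h : ℝ) (z : ℕ → EuclideanSpace ℝ (Fin 2))
    (hz : ∀ m, z (m + 1) = WithLp.toLp 2 (fun i =>
      if i = 0 then z m 0 + h * (-5 / 3) * z m 1
      else z m 1 - h * (-5 / 3) * z m 0)) (m : ℕ) :
    ‖z (m + 1)‖ = Real.sqrt (1 + (5 * h / 3) ^ 2) * ‖z m‖ := by
  have e1 : ‖z (m+1)‖ = Real.sqrt (∑ i, ‖z (m+1) i‖ ^ 2) := EuclideanSpace.norm_eq _
  have e2 : ‖z m‖ = Real.sqrt (∑ i, ‖z m i‖ ^ 2) := EuclideanSpace.norm_eq _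
  rw [e1, e2, ← Real.sqrt_mul (by positivity)]
  congr 1
  rw [hz m]
  simp [Fin.sum_univ_two, Real.norm_eq_abs, sq_abs]
  ring

/-- For the pendulum linearized at the stable equilibrium,
`J = [[0,1],[-1,0]]` and parasitic growth parameter `μ = -5/3`: the matrix `μJ`
has characteristic polynomial `X² + 25/9` (purely imaginary eigenvalues
`±(5/3)i`), so the first-order parasitic modes oscillate rather than grow
exponentially; and the linearized parasitic iteration `z_m = (I + hμJ) z_{m-1}`
satisfies the amplitude bound `‖z_n‖ ≤ (1 + (5h/3)²)^{n/2} ‖z₀‖`. -/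
theorem stmt19 (h : ℝ) (hh : 0 < h)
    (z : ℕ → EuclideanSpace ℝ (Fin 2))
    (hz : ∀ m, z (m + 1) = WithLp.toLp 2 (fun i =>
      if i = 0 then z m 0 + h * (-5 / 3) * z m 1
      else z m 1 - h * (-5 / 3) * z m 0)) :
    (((-5 / 3 : ℝ) • !![0, 1; -1, 0] : Matrix (Fin 2) (Fin 2) ℝ).charpoly
        = Polynomial.X ^ 2 + Polynomial.C (25 / 9))
    ∧ ∀ n : ℕ, ‖z n‖ ≤ (Real.sqrt (1 + (5 * h / 3) ^ 2)) ^ n * ‖z 0‖ := by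
  constructor
  · rw [Matrix.charpoly, Matrix.det_fin_two]
    simp [Matrix.charmatrix_apply_eq, Matrix.charmatrix_apply_ne, Matrix.smul_apply]
    rw [← Polynomial.C_mul, sq]
    norm_num
  · intro n
    induction n with
    | zero => simp
    | succ n ih =>
      rw [norm_step h z hz n]
      calc Real.sqrt (1 + (5 * h / 3) ^ 2) * ‖z n‖
          ≤ Real.sqrt (1 + (5 * h / 3) ^ 2) *
            ((Real.sqrt (1 + (5 * h / 3) ^ 2)) ^ n * ‖z 0‖) :=
            mul_le_mul_of_nonneg_left ih (Real.sqrt_nonneg _)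
        _ = (Real.sqrt (1 + (5 * h / 3) ^ 2)) ^ (n + 1) * ‖z 0‖ := by ring
end
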